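/- Let X be a finite-dimensional H-module admitting a positive definite •-invariant hermitian form, where H is the graded affine Hecke algebra with equal parameters. If D is the Dirac operator on X ⊗ S and D² = −Ω ⊗ 1 + Δ(Ω_{W̃}), then the central character ν of X satisfies |Re ν|² − |Im ν|² ≥ max{σ̃(Ω_{W̃}) : σ̃ appearing in X ⊗ S}. -/

import Mathlib

/-- Dirac inequality for `•`-unitary modules: if the (positive definite) form makes the
Dirac operator `D` on `X ⊗ S` skew-adjoint and `D² = −(|Re ν|² − |Im ν|²)·Id + A`, where
`A` is the action of `Δ(Ω_{W̃})`, then for each scalar `a` by which `Ω_{W̃}` acts on a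
`W̃`-type occurring in `X ⊗ S` (i.e. each eigenvalue of `A`) one has
`|Re ν|² − |Im ν|² ≥ a`; in particular the central character `ν` satisfies
`|Re ν|² − |Im ν|² ≥ max{σ̃(Ω_{W̃})}`. -/
theorem stmt13 {E Vr : Type*} [NormedAddCommGroup E] [InnerProductSpace ℂ E]
    [FiniteDimensional ℂ E] [NormedAddCommGroup Vr] [InnerProductSpace ℝ Vr]
    (νre νim : Vr) (D A : E →ₗ[ℂ] E)
    (hskew : LinearMap.adjoint D = -D)
    (hD2 : D ∘ₗ D = A - (((‖νre‖ ^ 2 - ‖νim‖ ^ 2 : ℝ) : ℂ)) • LinearMap.id) :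
    ∀ a : ℝ, (∃ x : E, x ≠ 0 ∧ A x = (a : ℂ) • x) → a ≤ ‖νre‖ ^ 2 - ‖νim‖ ^ 2 := by
  intro a ⟨x, hx, hAx⟩
  set c : ℝ := ‖νre‖ ^ 2 - ‖νim‖ ^ 2
  have hDDx : D (D x) = ((a - c : ℝ) : ℂ) • x := by
    have := congrArg (fun f => f x) hD2
    simp only [LinearMap.comp_apply, LinearMap.sub_apply, LinearMap.smul_apply,
      LinearMap.id_apply] at this
    rw [this, hAx, ← sub_smul]
    norm_cast
  have h1 : inner ℂ (D (D x)) x = - ((‖D x‖ : ℂ) ^ 2) := by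
    rw [← LinearMap.adjoint_inner_right D (D x) x, hskew]
    simp [inner_neg_right, inner_self_eq_norm_sq_to_K]
  have h2 : inner ℂ (D (D x)) x = ((a - c : ℝ) : ℂ) * (‖x‖ : ℂ) ^ 2 := by
    rw [hDDx, inner_smul_left]
    simp [inner_self_eq_norm_sq_to_K]
  have hre : (a - c) * ‖x‖ ^ 2 = - ‖D x‖ ^ 2 := by
    have := h2.symm.trans h1
    have := congrArg Complex.re this
    simpa [← Complex.ofReal_pow] using this
  have hxpos : 0 < ‖x‖ ^ 2 := pow_pos (norm_pos_iff.mpr hx) 2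
  nlinarith [sq_nonneg ‖D x‖]
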